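/- Let (W,S) be a Coxeter system, ω = (ω_1,...,ω_m) a word in S, and α a subword of ω. Then the output sort_ω(α) of the ω-sorting algorithm is a reduced word for the group element ⟨α⟩ = α_1···α_k ∈ W. -/

import Mathlib

namespace SortingPaper

variable {B : Type*} {M : CoxeterMatrix B} {W : Type*} [Group W]

/-- The subword of `ω` with index set `A` (0-based indices). -/
def subword (ω : List B) (A : Finset ℕ) : List B :=
  (A.sort (· ≤ ·)).filterMap (fun i => ω[i]?)

/-- Lexicographic comparison of index sets: `A ≤lex C` iff `A = C` or the minimum
element of the symmetric difference belongs to `A`. -/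
def lexLE (A C : Finset ℕ) : Prop :=
  A = C ∨ ∃ k, k ∈ A ∧ k ∉ C ∧ ∀ j < k, (j ∈ A ↔ j ∈ C)

/-- `A` is the index set of an ω-sorted word: the corresponding subword is reduced, and
`A` is lexicographically least among index sets of reduced subwords of `ω` with the
same product in `W`. -/
def IsSorted (cs : CoxeterSystem M W) (ω : List B) (A : Finset ℕ) : Prop :=
  A ⊆ Finset.range ω.length ∧ cs.IsReduced (subword ω A) ∧
  ∀ C ⊆ Finset.range ω.length, cs.IsReduced (subword ω C) →
    cs.wordProd (subword ω C) = cs.wordProd (subword ω A) → lexLE A C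

/-- The ω-sorting algorithm (auxiliary): scan the word, recording positions that are
left descents of the current element. -/
noncomputable def sortAux (cs : CoxeterSystem M W) : List B → ℕ → W → Finset ℕ
  | [], _, _ => ∅
  | s :: rest, i, x =>
    if cs.length (cs.simple s * x) < cs.length x then
      insert i (sortAux cs rest (i + 1) (cs.simple s * x))
    else sortAux cs rest (i + 1) x

/-- The index set produced by the ω-sorting algorithm applied to `u ∈ W`. -/
noncomputable def sortIdx (cs : CoxeterSystem M W) (ω : List B) (u : W) : Finset ℕ :=
  sortAux cs ω 0 u

/-! ### Auxiliary development: the exchange property and the sorting word -/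

section Aux

open List CoxeterSystem

open scoped Classical

variable (cs : CoxeterSystem M W)

/-- The permutation of `W × ZMod 2` associated to the simple reflection `i`. -/
noncomputable def eta (i : B) : Equiv.Perm (W × ZMod 2) :=
  Function.Involutive.toPerm
    (fun z => (cs.simple i * z.1 * cs.simple i, z.2 + if z.1 = cs.simple i then 1 else 0))
    (by
      have hiff : ∀ v : W, (cs.simple i * v * cs.simple i = cs.simple i) ↔ (v = cs.simple i) := by
        intro v
        constructor
        · intro h
          have h2 := congrArg (fun z => cs.simple i * z * cs.simple i) h
          simpa [mul_assoc, cs.simple_mul_simple_self, cs.simple_mul_simple_cancel_left]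
            using h2
        · rintro rfl
          simp [cs.simple_mul_simple_cancel_right]
      rintro ⟨w, e⟩
      refine Prod.ext ?_ ?_
      · simp [mul_assoc, cs.simple_mul_simple_self, cs.simple_mul_simple_cancel_left]
      · simp only
        rw [if_congr (hiff w) rfl rfl]
        have h11 : (1 : ZMod 2) + 1 = 0 := by decide
        split_ifs with h
        · rw [add_assoc, h11, add_zero]
        · rw [add_zero, add_zero])

theorem eta_apply (i : B) (z : W × ZMod 2) :
    eta cs i z = (cs.simple i * z.1 * cs.simple i,
      z.2 + if z.1 = cs.simple i then 1 else 0) := rfl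

theorem eta_liftable : M.IsLiftable (eta cs) := by
  intro i j
  set si := cs.simple i with hsi_def
  set sj := cs.simple j with hsj_def
  set m := M i j with hm_def
  set p := si * sj with hp_def
  have hsi : si * si = 1 := cs.simple_mul_simple_self i
  have hsj : sj * sj = 1 := cs.simple_mul_simple_self j
  have hp : p ^ m = 1 := cs.simple_mul_simple_pow i j
  have hq : (p⁻¹) ^ m = 1 := by rw [inv_pow, hp, inv_one]
  have hpinv : p⁻¹ = sj * si := by
    rw [hp_def, mul_inv_rev, hsi_def, hsj_def, cs.inv_simple, cs.inv_simple]
  -- conjugation of powers of p by the simple reflections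
  have hconj : ∀ (x : W), x * x = 1 → x * p * x = p⁻¹ →
      ∀ a : ℕ, (p⁻¹) ^ a * x * p ^ a = (p⁻¹) ^ (a + a) * x := by
    intro x hx hxp a
    have e1 : x * p ^ a * x = (p⁻¹) ^ a := by
      have := conj_pow (i := a) (a := x) (b := p)
      have hxinv : x⁻¹ = x := inv_eq_of_mul_eq_one_right hx
      rw [hxinv, hxp] at this
      exact this.symm
    have e2 : x * p ^ a = (p⁻¹) ^ a * x := by
      have := congrArg (· * x) e1
      simpa [mul_assoc, hx] using this
    calc (p⁻¹) ^ a * x * p ^ a = (p⁻¹) ^ a * (x * p ^ a) := by rw [mul_assoc]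
      _ = (p⁻¹) ^ a * ((p⁻¹) ^ a * x) := by rw [e2]
      _ = (p⁻¹) ^ (a + a) * x := by rw [← mul_assoc, ← pow_add]
  have hconj_i : ∀ a : ℕ, (p⁻¹) ^ a * si * p ^ a = (p⁻¹) ^ (a + a) * si := by
    refine hconj si hsi ?_
    rw [hp_def, hpinv, ← mul_assoc, hsi, one_mul]
  have hconj_j : ∀ a : ℕ, (p⁻¹) ^ a * sj * p ^ a = (p⁻¹) ^ (a + a) * sj := by
    refine hconj sj hsj ?_
    rw [hp_def, hpinv]
    calc sj * (si * sj) * sj = sj * (si * (sj * sj)) := by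
          rw [mul_assoc, mul_assoc]
      _ = sj * si := by rw [hsj, mul_one]
  -- the sequence of reflections
  set T : ℕ → W := fun ℓ =>
    if Even ℓ then (p⁻¹) ^ (ℓ / 2) * sj * p ^ (ℓ / 2)
    else (p⁻¹) ^ (ℓ / 2 + 1) * si * p ^ (ℓ / 2 + 1) with hT_def
  have hTeven : ∀ r : ℕ, T (2 * r) = (p⁻¹) ^ r * sj * p ^ r := by
    intro r
    rw [hT_def]
    simp only
    rw [if_pos (even_two_mul r), Nat.mul_div_cancel_left r (by norm_num)]
  have hTodd : ∀ r : ℕ, T (2 * r + 1) = (p⁻¹) ^ (r + 1) * si * p ^ (r + 1) := by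
    intro r
    rw [hT_def]
    simp only
    rw [if_neg (by simp [Nat.even_add_one, parity_simps]), (by omega : (2 * r + 1) / 2 = r)]
  -- periodicity of T
  have hTper : ∀ ℓ : ℕ, T (ℓ + m) = T ℓ := by
    intro ℓ
    rcases Nat.even_or_odd ℓ with ⟨r, hr⟩ | ⟨r, hr⟩ <;>
      rcases Nat.even_or_odd m with ⟨u, hu⟩ | ⟨u, hu⟩
    · -- ℓ = 2r, m = 2u
      rw [(by omega : ℓ + m = 2 * (r + u)), hTeven, (by omega : ℓ = 2 * r), hTeven]
      calc (p⁻¹) ^ (r + u) * sj * p ^ (r + u)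
          = (p⁻¹) ^ r * ((p⁻¹) ^ u * sj * p ^ u) * p ^ r := by group
        _ = (p⁻¹) ^ r * ((p⁻¹) ^ (u + u) * sj) * p ^ r := by rw [hconj_j]
        _ = (p⁻¹) ^ r * sj * p ^ r := by
            rw [(by omega : u + u = m), hq, one_mul]
    · -- ℓ = 2r, m = 2u + 1
      rw [(by omega : ℓ + m = 2 * (r + u) + 1), hTodd, (by omega : ℓ = 2 * r), hTeven]
      calc (p⁻¹) ^ (r + u + 1) * si * p ^ (r + u + 1)
          = (p⁻¹) ^ r * ((p⁻¹) ^ (u + 1) * si * p ^ (u + 1)) * p ^ r := by group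
        _ = (p⁻¹) ^ r * ((p⁻¹) ^ ((u + 1) + (u + 1)) * si) * p ^ r := by rw [hconj_i]
        _ = (p⁻¹) ^ r * sj * p ^ r := by
            rw [(by omega : (u + 1) + (u + 1) = m + 1), pow_succ, hq, one_mul, hpinv,
              mul_assoc sj si si, hsi, mul_one]
    · -- ℓ = 2r + 1, m = 2u
      rw [(by omega : ℓ + m = 2 * (r + u) + 1), hTodd, (by omega : ℓ = 2 * r + 1), hTodd]
      calc (p⁻¹) ^ (r + u + 1) * si * p ^ (r + u + 1)
          = (p⁻¹) ^ (r + 1) * ((p⁻¹) ^ u * si * p ^ u) * p ^ (r + 1) := by group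
        _ = (p⁻¹) ^ (r + 1) * ((p⁻¹) ^ (u + u) * si) * p ^ (r + 1) := by rw [hconj_i]
        _ = (p⁻¹) ^ (r + 1) * si * p ^ (r + 1) := by
            rw [(by omega : u + u = m), hq, one_mul]
    · -- ℓ = 2r + 1, m = 2u + 1
      rw [(by omega : ℓ + m = 2 * (r + u + 1)), hTeven, (by omega : ℓ = 2 * r + 1), hTodd]
      have hpow : (p⁻¹) ^ (u + u) = p := by
        have h1 : (p⁻¹) ^ (u + u) * p⁻¹ = 1 := by
          rw [← pow_succ, (by omega : u + u + 1 = m), hq]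
        exact mul_inv_eq_one.mp h1
      calc (p⁻¹) ^ (r + u + 1) * sj * p ^ (r + u + 1)
          = (p⁻¹) ^ (r + 1) * ((p⁻¹) ^ u * sj * p ^ u) * p ^ (r + 1) := by group
        _ = (p⁻¹) ^ (r + 1) * ((p⁻¹) ^ (u + u) * sj) * p ^ (r + 1) := by rw [hconj_j]
        _ = (p⁻¹) ^ (r + 1) * si * p ^ (r + 1) := by
            rw [hpow, hp_def, mul_assoc si sj sj, hsj, mul_one]
  -- the indicator function
  set f : W → ZMod 2 := fun v =>
    (if v = sj then 1 else 0) + (if v = sj * si * sj then 1 else 0) with hf_def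
  -- action of one step
  have hstep : ∀ z : W × ZMod 2,
      (eta cs i * eta cs j) z = (p * z.1 * p⁻¹, z.2 + f z.1) := by
    rintro ⟨w, e⟩
    show eta cs i (eta cs j (w, e)) = _
    rw [eta_apply, eta_apply]
    refine Prod.ext ?_ ?_
    · show si * (sj * w * sj) * si = p * w * p⁻¹
      rw [hp_def, hpinv]
      group
    · show e + (if w = sj then 1 else 0) + (if sj * w * sj = si then 1 else 0) = e + f w
      have hiff : (sj * w * sj = si) ↔ (w = sj * si * sj) := by
        constructor
        · intro h
          have h2 := congrArg (fun z => sj * z * sj) h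
          calc w = (sj * sj) * w * (sj * sj) := by rw [hsj, one_mul, mul_one]
            _ = sj * (sj * w * sj) * sj := by group
            _ = sj * si * sj := by rw [h]
        · rintro rfl
          calc sj * (sj * si * sj) * sj = (sj * sj) * si * (sj * sj) := by group
            _ = si := by rw [hsj, one_mul, mul_one]
      rw [if_congr hiff rfl rfl, hf_def]
      simp only
      ring
  -- action of k steps
  have hpow_apply : ∀ (k : ℕ) (z : W × ZMod 2),
      ((eta cs i * eta cs j) ^ k) z =
        (p ^ k * z.1 * (p⁻¹) ^ k,
          z.2 + ∑ r ∈ Finset.range k, f (p ^ r * z.1 * (p⁻¹) ^ r)) := by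
    intro k
    induction k with
    | zero => rintro ⟨w, e⟩; simp
    | succ k ih =>
      rintro ⟨w, e⟩
      rw [pow_succ, Equiv.Perm.mul_apply, hstep, ih]
      refine Prod.ext ?_ ?_
      · show p ^ k * (p * w * p⁻¹) * (p⁻¹) ^ k = p ^ (k + 1) * w * (p⁻¹) ^ (k + 1)
        group
      · show (e + f w) + ∑ r ∈ Finset.range k, f (p ^ r * (p * w * p⁻¹) * (p⁻¹) ^ r) =
          e + ∑ r ∈ Finset.range (k + 1), f (p ^ r * w * (p⁻¹) ^ r)
        rw [Finset.sum_range_succ']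
        have hterm : ∀ r : ℕ, f (p ^ r * (p * w * p⁻¹) * (p⁻¹) ^ r) =
            f (p ^ (r + 1) * w * (p⁻¹) ^ (r + 1)) := by
          intro r
          congr 1
          group
        rw [Finset.sum_congr rfl (fun r _ => hterm r)]
        simp only [pow_zero, one_mul, mul_one]
        ring
  -- conclusion
  refine Equiv.ext ?_
  rintro ⟨w, e⟩
  rw [hpow_apply m (w, e)]
  have h1 : p ^ m * w * (p⁻¹) ^ m = w := by rw [hp, hq, one_mul, mul_one]
  refine Prod.ext ?_ ?_
  · simpa using h1
  · show e + ∑ r ∈ Finset.range m, f (p ^ r * w * (p⁻¹) ^ r) = e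
    have hterm : ∀ r : ℕ, f (p ^ r * w * (p⁻¹) ^ r) =
        (if w = T (2 * r) then 1 else 0) + (if w = T (2 * r + 1) then 1 else 0) := by
      intro r
      rw [hf_def]
      simp only
      have hiff1 : (p ^ r * w * (p⁻¹) ^ r = sj) ↔ (w = T (2 * r)) := by
        rw [hTeven]
        constructor
        · intro h
          calc w = (p⁻¹) ^ r * (p ^ r * w * (p⁻¹) ^ r) * p ^ r := by group
            _ = (p⁻¹) ^ r * sj * p ^ r := by rw [h]
        · rintro rfl
          group
      have hiff2 : (p ^ r * w * (p⁻¹) ^ r = sj * si * sj) ↔ (w = T (2 * r + 1)) := by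
        have hcentral : (p⁻¹) ^ r * (sj * si * sj) * p ^ r = T (2 * r + 1) := by
          rw [hTodd]
          have hkey : p⁻¹ * si * p = sj * si * sj := by
            rw [hpinv, hp_def, mul_assoc sj si si, hsi, mul_one, ← mul_assoc]
          rw [← hkey]
          group
        constructor
        · intro h
          rw [← hcentral]
          calc w = (p⁻¹) ^ r * (p ^ r * w * (p⁻¹) ^ r) * p ^ r := by group
            _ = (p⁻¹) ^ r * (sj * si * sj) * p ^ r := by rw [h]
        · intro h
          rw [← hcentral] at h
          rw [h]
          group
      rw [if_congr hiff1 rfl rfl, if_congr hiff2 rfl rfl]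
    rw [Finset.sum_congr rfl (fun r _ => hterm r)]
    have hsum_pair : ∀ (n : ℕ) (g : ℕ → ZMod 2),
        ∑ r ∈ Finset.range n, (g (2 * r) + g (2 * r + 1)) = ∑ ℓ ∈ Finset.range (2 * n), g ℓ := by
      intro n g
      induction n with
      | zero => simp
      | succ n ih =>
        rw [Finset.sum_range_succ, ih, (by omega : 2 * (n + 1) = (2 * n + 1) + 1),
          Finset.sum_range_succ, Finset.sum_range_succ]
        ring
    rw [hsum_pair m (fun ℓ => if w = T ℓ then 1 else 0)]
    rw [two_mul, Finset.sum_range_add]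
    have hshift : ∀ ℓ : ℕ, (if w = T (m + ℓ) then (1 : ZMod 2) else 0) =
        (if w = T ℓ then 1 else 0) := by
      intro ℓ
      rw [Nat.add_comm m ℓ, hTper ℓ]
    rw [Finset.sum_congr rfl (fun ℓ _ => hshift ℓ), ← Finset.sum_add_distrib]
    have hzz : ∀ x : ZMod 2, x + x = 0 := by decide
    rw [Finset.sum_congr rfl (fun ℓ _ => hzz _), Finset.sum_const_zero, add_zero]

/-- The homomorphism `W →* Perm (W × ZMod 2)` extending `eta`. -/
noncomputable def phi : W →* Equiv.Perm (W × ZMod 2) :=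
  cs.lift ⟨eta cs, eta_liftable cs⟩

theorem phi_simple (i : B) : phi cs (cs.simple i) = eta cs i :=
  cs.lift_apply_simple (eta_liftable cs) i

theorem phi_wordProd (ω : List B) (z : W × ZMod 2) :
    phi cs (cs.wordProd ω) z =
      (cs.wordProd ω * z.1 * (cs.wordProd ω)⁻¹,
        z.2 + (((cs.leftInvSeq ω).count (cs.wordProd ω * z.1 * (cs.wordProd ω)⁻¹) : ℕ) :
          ZMod 2)) := by
  induction ω with
  | nil => simp
  | cons i ω ih =>
    rw [cs.wordProd_cons, map_mul, Equiv.Perm.mul_apply, ih, phi_simple, eta_apply]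
    have hfirst : cs.simple i * (cs.wordProd ω * z.1 * (cs.wordProd ω)⁻¹) * cs.simple i
        = (cs.simple i * cs.wordProd ω) * z.1 * (cs.simple i * cs.wordProd ω)⁻¹ := by
      rw [mul_inv_rev, cs.inv_simple]
      group
    have hlis : cs.leftInvSeq (i :: ω) =
        cs.simple i :: List.map (⇑(MulAut.conj (cs.simple i))) (cs.leftInvSeq ω) := rfl
    refine Prod.ext hfirst ?_
    show z.2 + (((cs.leftInvSeq ω).count (cs.wordProd ω * z.1 * (cs.wordProd ω)⁻¹) : ℕ) : ZMod 2)
          + (if cs.wordProd ω * z.1 * (cs.wordProd ω)⁻¹ = cs.simple i then 1 else 0)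
        = z.2 + (((cs.leftInvSeq (i :: ω)).count
            ((cs.simple i * cs.wordProd ω) * z.1 * (cs.simple i * cs.wordProd ω)⁻¹) : ℕ) :
              ZMod 2)
    rw [← hfirst]
    have hYconj : cs.simple i * (cs.wordProd ω * z.1 * (cs.wordProd ω)⁻¹) * cs.simple i =
        MulAut.conj (cs.simple i) (cs.wordProd ω * z.1 * (cs.wordProd ω)⁻¹) := by
      rw [MulAut.conj_apply, cs.inv_simple]
    rw [hYconj, hlis, List.count_cons,
      List.count_map_of_injective _ _ (MulAut.conj (cs.simple i)).injective]
    have hdec : (MulAut.conj (cs.simple i) (cs.wordProd ω * z.1 * (cs.wordProd ω)⁻¹)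
        = cs.simple i) ↔ (cs.wordProd ω * z.1 * (cs.wordProd ω)⁻¹ = cs.simple i) := by
      rw [MulAut.conj_apply, cs.inv_simple]
      constructor
      · intro h
        have h2 := congrArg (fun v => cs.simple i * v * cs.simple i) h
        simpa [mul_assoc, cs.simple_mul_simple_cancel_left, cs.simple_mul_simple_self]
          using h2
      · intro h
        rw [h, cs.simple_mul_simple_self, one_mul]
    rw [Nat.cast_add]
    have hdec2 : ((cs.simple i == MulAut.conj (cs.simple i)
        (cs.wordProd ω * z.1 * (cs.wordProd ω)⁻¹)) = true) ↔
        (cs.wordProd ω * z.1 * (cs.wordProd ω)⁻¹ = cs.simple i) := by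
      rw [beq_iff_eq, eq_comm]
      exact hdec
    rw [if_congr hdec2 rfl rfl, apply_ite (fun n : ℕ => (n : ZMod 2)), Nat.cast_one,
      Nat.cast_zero]
    ring

/-- Parity invariance: the parity of the number of occurrences of `t` in the left inversion
sequence depends only on the product of the word. -/
theorem count_leftInvSeq_parity {ω ω' : List B} (h : cs.wordProd ω = cs.wordProd ω') (t : W) :
    (((cs.leftInvSeq ω).count t : ℕ) : ZMod 2) = (((cs.leftInvSeq ω').count t : ℕ) : ZMod 2) := by
  have h1 := phi_wordProd cs ω ((cs.wordProd ω)⁻¹ * t * cs.wordProd ω, (0 : ZMod 2))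
  have h2 := phi_wordProd cs ω' ((cs.wordProd ω')⁻¹ * t * cs.wordProd ω', (0 : ZMod 2))
  have hc : cs.wordProd ω * ((cs.wordProd ω)⁻¹ * t * cs.wordProd ω) * (cs.wordProd ω)⁻¹ = t := by
    group
  have hc' : cs.wordProd ω' * ((cs.wordProd ω')⁻¹ * t * cs.wordProd ω') *
      (cs.wordProd ω')⁻¹ = t := by group
  rw [hc] at h1
  rw [hc'] at h2
  rw [h] at h1
  rw [h1] at h2
  have := congrArg Prod.snd h2
  simpa using this

/-- The exchange-type deletion property, for arbitrary words. -/
theorem exists_sublist_of_simple_mul {β : List B} {i : B}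
    (h : cs.length (cs.simple i * cs.wordProd β) < cs.length (cs.wordProd β)) :
    ∃ γ, γ.Sublist β ∧ cs.wordProd γ = cs.simple i * cs.wordProd β := by
  obtain ⟨γ₀, hred, hv⟩ := cs.exists_reduced_word' (cs.simple i * cs.wordProd β)
  have hprod : cs.wordProd (i :: γ₀) = cs.wordProd β := by
    rw [cs.wordProd_cons, ← hv, cs.simple_mul_simple_cancel_left]
  have hlen : cs.length (cs.simple i * cs.wordProd β) + 1 = cs.length (cs.wordProd β) := by
    rcases cs.length_simple_mul (cs.wordProd β) i with h1 | h1
    · omega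
    · exact h1
  have hred' : cs.IsReduced (i :: γ₀) := by
    show cs.length (cs.wordProd (i :: γ₀)) = (i :: γ₀).length
    rw [hprod, List.length_cons]
    have : cs.length (cs.wordProd γ₀) = γ₀.length := hred
    rw [← this, ← hv]
    omega
  have hnodup : (cs.leftInvSeq (i :: γ₀)).Nodup := hred'.nodup_leftInvSeq
  have hmem : cs.simple i ∈ cs.leftInvSeq (i :: γ₀) := by
    have : cs.leftInvSeq (i :: γ₀) =
        cs.simple i :: List.map (MulAut.conj (cs.simple i)) (cs.leftInvSeq γ₀) := rfl
    rw [this]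
    exact List.mem_cons_self
  have hcount1 : (cs.leftInvSeq (i :: γ₀)).count (cs.simple i) = 1 :=
    List.count_eq_one_of_mem hnodup hmem
  have hpar := count_leftInvSeq_parity cs hprod.symm (cs.simple i)
  rw [hcount1] at hpar
  have hne : (cs.leftInvSeq β).count (cs.simple i) ≠ 0 := by
    intro h0
    rw [h0] at hpar
    exact (by decide : ((0 : ℕ) : ZMod 2) ≠ ((1 : ℕ) : ZMod 2)) hpar
  have hmemβ : cs.simple i ∈ cs.leftInvSeq β :=
    List.count_pos_iff.mp (Nat.pos_of_ne_zero hne)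
  obtain ⟨n, hn, hget⟩ := List.mem_iff_getElem.mp hmemβ
  have hgetD : (cs.leftInvSeq β).getD n 1 = cs.simple i := by
    rw [List.getD_eq_getElem _ _ hn, hget]
  have hdel := cs.getD_leftInvSeq_mul_wordProd β n
  rw [hgetD] at hdel
  exact ⟨β.eraseIdx n, List.eraseIdx_sublist β n, hdel.symm⟩

/-- The word produced by the ω-sorting algorithm. -/
noncomputable def sortWord (cs : CoxeterSystem M W) : List B → W → List B
  | [], _ => []
  | i :: rest, x =>
    if cs.length (cs.simple i * x) < cs.length x then
      i :: sortWord cs rest (cs.simple i * x)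
    else sortWord cs rest x

/-- Correctness of the sorting algorithm: if `x` is the product of a subword of `l`, then
`sortWord cs l x` is a reduced word for `x`. -/
theorem sortWord_spec : ∀ (l : List B) (x : W), (∃ β, β.Sublist l ∧ cs.wordProd β = x) →
    cs.IsReduced (sortWord cs l x) ∧ cs.wordProd (sortWord cs l x) = x := by
  intro l
  induction l with
  | nil =>
    rintro x ⟨β, hβ, rfl⟩
    rw [List.sublist_nil.mp hβ]
    constructor
    · show cs.length (cs.wordProd (sortWord cs [] (cs.wordProd []))) =
        (sortWord cs [] (cs.wordProd [])).length
      simp [sortWord]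
    · simp [sortWord]
  | cons i rest ih =>
    rintro x ⟨β, hβ, rfl⟩
    by_cases hlt : cs.length (cs.simple i * cs.wordProd β) < cs.length (cs.wordProd β)
    · have hexp : ∃ γ, γ.Sublist rest ∧ cs.wordProd γ = cs.simple i * cs.wordProd β := by
        cases hβ with
        | cons _ h =>
          obtain ⟨γ, hγ, hγp⟩ := exists_sublist_of_simple_mul cs hlt
          exact ⟨γ, hγ.trans h, hγp⟩
        | cons_cons _ h =>
          rename_i tail
          refine ⟨tail, h, ?_⟩
          rw [cs.wordProd_cons, cs.simple_mul_simple_cancel_left]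
      obtain ⟨hr, hp⟩ := ih (cs.simple i * cs.wordProd β) hexp
      have heq : sortWord cs (i :: rest) (cs.wordProd β) =
          i :: sortWord cs rest (cs.simple i * cs.wordProd β) := by
        rw [sortWord, if_pos hlt]
      rw [heq]
      have hprod : cs.wordProd (i :: sortWord cs rest (cs.simple i * cs.wordProd β)) =
          cs.wordProd β := by
        rw [cs.wordProd_cons, hp, cs.simple_mul_simple_cancel_left]
      refine ⟨?_, hprod⟩
      show cs.length (cs.wordProd (i :: sortWord cs rest (cs.simple i * cs.wordProd β))) =
        (i :: sortWord cs rest (cs.simple i * cs.wordProd β)).length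
      rw [hprod, List.length_cons]
      have h1 : cs.length (cs.wordProd (sortWord cs rest (cs.simple i * cs.wordProd β))) =
          (sortWord cs rest (cs.simple i * cs.wordProd β)).length := hr
      rw [← h1, hp]
      rcases cs.length_simple_mul (cs.wordProd β) i with h2 | h2
      · omega
      · omega
    · have hexp : ∃ γ, γ.Sublist rest ∧ cs.wordProd γ = cs.wordProd β := by
        cases hβ with
        | cons _ h => exact ⟨β, h, rfl⟩
        | cons_cons _ h =>
          rename_i tail
          have hy : cs.simple i * cs.wordProd (i :: tail) = cs.wordProd tail := by
            rw [cs.wordProd_cons, cs.simple_mul_simple_cancel_left]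
          have hne := cs.length_simple_mul_ne (cs.wordProd tail) i
          have hcons : cs.wordProd (i :: tail) = cs.simple i * cs.wordProd tail :=
            cs.wordProd_cons i tail
          have hle : cs.length (cs.wordProd (i :: tail)) ≤ cs.length (cs.wordProd tail) := by
            rw [hy] at hlt
            omega
          have hlt' : cs.length (cs.simple i * cs.wordProd tail) <
              cs.length (cs.wordProd tail) := by
            rw [hcons] at hle
            omega
          obtain ⟨γ, hγ, hγp⟩ := exists_sublist_of_simple_mul cs hlt'
          exact ⟨γ, hγ.trans h, by rw [hγp, ← hcons]⟩
      have heq : sortWord cs (i :: rest) (cs.wordProd β) =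
          sortWord cs rest (cs.wordProd β) := by
        rw [sortWord, if_neg hlt]
      rw [heq]
      exact ih (cs.wordProd β) hexp

theorem le_of_mem_sortAux : ∀ (l : List B) (n : ℕ) (x : W) (k : ℕ),
    k ∈ sortAux cs l n x → n ≤ k := by
  intro l
  induction l with
  | nil => intro n x k hk; simp [sortAux] at hk
  | cons i rest ih =>
    intro n x k hk
    rw [sortAux] at hk
    split_ifs at hk with h
    · rcases Finset.mem_insert.mp hk with rfl | hk'
      · exact le_refl _
      · exact Nat.le_of_succ_le (ih (n + 1) (cs.simple i * x) k hk')
    · exact Nat.le_of_succ_le (ih (n + 1) x k hk)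

theorem subword_sortAux (ω : List B) : ∀ (l : List B) (n : ℕ) (x : W),
    (∀ j, ω[n + j]? = l[j]?) →
    subword ω (sortAux cs l n x) = sortWord cs l x := by
  intro l
  induction l with
  | nil =>
    intro n x _
    rw [sortAux, sortWord]
    simp [subword]
  | cons i rest ih =>
    intro n x H
    have h0 : ω[n]? = some i := by simpa using H 0
    have H' : ∀ j, ω[(n + 1) + j]? = rest[j]? := by
      intro j
      have := H (j + 1)
      rwa [(by omega : n + (j + 1) = (n + 1) + j)] at this
    rw [sortAux, sortWord]
    split_ifs with h
    · set S := sortAux cs rest (n + 1) (cs.simple i * x) with hS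
      have hSgt : ∀ k ∈ S, n < k := fun k hk =>
        Nat.lt_of_succ_le (le_of_mem_sortAux cs rest (n + 1) (cs.simple i * x) k hk)
      have hnS : n ∉ S := fun hmem => lt_irrefl n (hSgt n hmem)
      have hsort : (insert n S).sort (· ≤ ·) = n :: S.sort (· ≤ ·) :=
        Finset.sort_insert _ (fun b hb => le_of_lt (hSgt b hb)) hnS
      show subword ω (insert n S) = i :: sortWord cs rest (cs.simple i * x)
      rw [subword, hsort, List.filterMap_cons, h0, ← ih (n + 1) (cs.simple i * x) H']
      rfl
    · exact ih (n + 1) x H'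

theorem filterMap_get?_sublist_aux : ∀ (n : ℕ) (is : List ℕ), is.length ≤ n →
    ∀ (ω : List B), is.Pairwise (· < ·) → (is.filterMap (fun k => ω[k]?)).Sublist ω := by
  intro n
  induction n with
  | zero =>
    intro is hlen ω _
    rw [List.length_eq_zero_iff.mp (Nat.le_zero.mp hlen)]
    simp
  | succ n ihn =>
    intro is hlen ω hpw
    match is, hlen, hpw with
    | [], _, _ => simp
    | i :: is, hlen, hpw =>
      rw [List.pairwise_cons] at hpw
      obtain ⟨hlt, htl⟩ := hpw
      rw [List.filterMap_cons]
      cases h : ω[i]? with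
      | none =>
        have hlenω : ω.length ≤ i := by
          exact le_of_not_gt (fun hc => by simp [List.getElem?_eq_getElem hc] at h)
        have : is.filterMap (fun k => ω[k]?) = [] := by
          rw [List.filterMap_eq_nil_iff]
          intro k hk
          have : ω.length ≤ k := le_trans hlenω (le_of_lt (hlt k hk))
          rw [List.getElem?_eq_none this]
        rw [this]
        exact List.nil_sublist ω
      | some b =>
        have hi : i < ω.length := by
          by_contra hc
          rw [List.getElem?_eq_none (le_of_not_gt hc)] at h
          exact Option.some_ne_none b h.symm
        have hkey : is.filterMap (fun k => ω[k]?) =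
            (is.map (fun k => k - (i + 1))).filterMap (fun k => (ω.drop (i + 1))[k]?) := by
          rw [List.filterMap_map]
          refine (List.filterMap_congr ?_).symm
          intro k hk
          show (ω.drop (i + 1))[k - (i + 1)]? = ω[k]?
          rw [List.getElem?_drop, (by have := hlt k hk; omega : i + 1 + (k - (i + 1)) = k)]
        have hpw' : (is.map (fun k => k - (i + 1))).Pairwise (· < ·) := by
          rw [List.pairwise_map]
          refine htl.imp_of_mem ?_
          intro a b ha hb hab
          have h1 := hlt a ha
          omega
        have h2 : (is.filterMap (fun k => ω[k]?)).Sublist (ω.drop (i + 1)) := by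
          rw [hkey]
          refine ihn _ ?_ (ω.drop (i + 1)) hpw'
          rw [List.length_map]
          exact Nat.le_of_succ_le_succ hlen
        have hb : ω[i] = b := by
          rw [List.getElem?_eq_getElem hi] at h
          exact Option.some_injective _ h
        have h3 : ω.drop i = b :: ω.drop (i + 1) := by
          rw [List.drop_eq_getElem_cons hi, hb]
        calc b :: is.filterMap (fun k => ω[k]?)
            <+ b :: ω.drop (i + 1) := List.cons_sublist_cons.mpr h2
          _ = ω.drop i := h3.symm
          _ <+ ω := List.drop_sublist i ω

theorem filterMap_get?_sublist (is : List ℕ) (ω : List B) (hpw : is.Pairwise (· < ·)) :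
    (is.filterMap (fun k => ω[k]?)).Sublist ω :=
  filterMap_get?_sublist_aux is.length is le_rfl ω hpw

end Aux

/-- The output of the ω-sorting algorithm applied to the element
represented by a subword `α ⊆ ω` is a reduced word for that element. -/
theorem sortIdx_isReduced_and_prod (cs : CoxeterSystem M W) (ω : List B)
    (A : Finset ℕ) (hA : A ⊆ Finset.range ω.length) :
    cs.IsReduced (subword ω (sortIdx cs ω (cs.wordProd (subword ω A)))) ∧
    cs.wordProd (subword ω (sortIdx cs ω (cs.wordProd (subword ω A)))) =
      cs.wordProd (subword ω A) := by
  set u := cs.wordProd (subword ω A) with hu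
  have hsub : (subword ω A).Sublist ω := by
    rw [subword]
    exact filterMap_get?_sublist _ ω (A.sortedLT_sort.pairwise)
  have h2 : subword ω (sortIdx cs ω u) = sortWord cs ω u := by
    rw [sortIdx]
    exact subword_sortAux cs ω ω 0 u (fun j => by rw [Nat.zero_add])
  rw [h2]
  exact sortWord_spec cs ω u ⟨subword ω A, hsub, hu.symm⟩

end SortingPaper
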